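/- arXiv:2506.14553 — 5 statements merged into one kernel-verified Lean document; each statement's English description precedes it below -/
import Mathlib

section
/- Let (α, 𝒜) be a measurable space, let d be a positive integer, and for 1 ≤ i, j ≤ d let μ_{ij} be finite signed measures on α such that for every A ∈ 𝒜 the d×d real matrix (μ_{ij}(A))_{i,j} is positive semidefinite. Then each diagonal entry μ_{ii} is a (nonnegative) finite measure; setting τ := Σ_{i=1}^d μ_{ii} (the trace measure), every μ_{ij} is absolutely continuous with respect to τ, and there exists a measurable map c : α → Matrix (Fin d) (Fin d) ℝ such that c(x) is positive semidefinite with trace Tr(c(x)) = 1 for τ-almost every x and μ_{ij}(A) = ∫_A (c x)_{ij} dτ(x) for all A ∈ 𝒜 and all i, j. Moreover, any two such maps c agree τ-almost everywhere. -/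
open MeasureTheory Set
open scoped ENNReal

private lemma dot_expand {d : ℕ} (M : Matrix (Fin d) (Fin d) ℝ) (v : Fin d → ℝ) :
    dotProduct v (M.mulVec v) = ∑ i, ∑ j, v i * v j * M i j := by
  simp only [dotProduct, Matrix.mulVec, Finset.mul_sum]
  exact Finset.sum_congr rfl fun i _ => Finset.sum_congr rfl fun j _ => by ring

private lemma quad_single {d : ℕ} {M : Matrix (Fin d) (Fin d) ℝ} (hM : M.PosSemidef)
    (i j : Fin d) (a b : ℝ) :
    0 ≤ a * a * M i i + a * b * M i j + b * a * M j i + b * b * M j j := by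
  have h := hM.dotProduct_mulVec_nonneg (Pi.single i a + Pi.single j b)
  simp only [star_trivial, add_dotProduct, dotProduct_add, Matrix.mulVec_add,
    Matrix.mulVec_single, single_dotProduct, Pi.smul_apply, Matrix.col_apply, op_smul_eq_mul] at h
  ring_nf at h ⊢
  linarith

private lemma psd_diag_nonneg {d : ℕ} {M : Matrix (Fin d) (Fin d) ℝ} (hM : M.PosSemidef)
    (i : Fin d) : 0 ≤ M i i := by
  simpa using hM.dotProduct_mulVec_nonneg (Pi.single i 1)

private lemma psd_offdiag_zero {d : ℕ} {M : Matrix (Fin d) (Fin d) ℝ} (hM : M.PosSemidef)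
    {i j : Fin d} (hi : M i i = 0) (hj : M j j = 0) : M i j = 0 := by
  have hsymm : M j i = M i j := by simpa using hM.1.apply i j
  have h1 := quad_single hM i j 1 1
  have h2 := quad_single hM i j 1 (-1)
  rw [hi, hj, hsymm] at h1 h2
  nlinarith

private lemma psd_entry_bound {d : ℕ} {M : Matrix (Fin d) (Fin d) ℝ} (hM : M.PosSemidef)
    (htr : M.trace = 1) (i j : Fin d) : |M i j| ≤ 1 := by
  have hdiag : ∀ k, 0 ≤ M k k := psd_diag_nonneg hM
  have hsum : ∑ k, M k k = 1 := htr
  by_cases hij : i = j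
  · subst hij
    rw [abs_of_nonneg (hdiag i)]
    calc M i i ≤ ∑ k, M k k := Finset.single_le_sum (fun k _ => hdiag k) (Finset.mem_univ i)
    _ = 1 := hsum
  · have hsub : M i i + M j j ≤ 1 := by
      have : ∑ k ∈ ({i, j} : Finset (Fin d)), M k k ≤ ∑ k, M k k :=
        Finset.sum_le_sum_of_subset_of_nonneg (Finset.subset_univ _) (fun k _ _ => hdiag k)
      rwa [Finset.sum_pair hij, hsum] at this
    have hsymm : M j i = M i j := by simpa using hM.1.apply i j
    have h1 := quad_single hM i j 1 1
    have h2 := quad_single hM i j 1 (-1)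
    rw [hsymm] at h1 h2
    rw [abs_le]
    constructor <;> nlinarith [hdiag i, hdiag j]

private lemma quad_continuous {d : ℕ} (M : Matrix (Fin d) (Fin d) ℝ) :
    Continuous fun v : Fin d → ℝ => dotProduct v (M.mulVec v) := by
  simp only [dotProduct, Matrix.mulVec]
  fun_prop

/-- Static form of the factorization in Lemma 3.1 of the paper: a matrix of finite signed
measures `(μ i j)` whose value matrix is positive semidefinite on every measurable set has
nonnegative diagonal entries; the trace measure `τ` (characterized by
`τ A = ∑ i, μ i i A`) dominates every `μ i j`, and there is a `τ`-a.e. unique measurable,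
positive semidefinite, trace-one matrix density `c` with `μ i j A = ∫_A (c x) i j dτ`. -/
theorem signedMeasure_matrix_trace_factorization
    {α : Type*} [MeasurableSpace α] {d : ℕ} (hd : 0 < d)
    (μ : Fin d → Fin d → SignedMeasure α)
    (hpsd : ∀ A : Set α, MeasurableSet A →
      (Matrix.of fun i j => μ i j A).PosSemidef) :
    (∀ i, ∀ A : Set α, MeasurableSet A → 0 ≤ μ i i A) ∧
    ∃ τ : Measure α, IsFiniteMeasure τ ∧
      (∀ A : Set α, MeasurableSet A → τ A = ENNReal.ofReal (∑ i, μ i i A)) ∧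
      (∀ i j, ∀ A : Set α, MeasurableSet A → τ A = 0 → μ i j A = 0) ∧
      ∃ c : α → Matrix (Fin d) (Fin d) ℝ,
        (∀ i j, Measurable fun x => c x i j) ∧
        (∀ᵐ x ∂τ, (c x).PosSemidef ∧ (c x).trace = 1) ∧
        (∀ i j, ∀ A : Set α, MeasurableSet A → μ i j A = ∫ x in A, c x i j ∂τ) ∧
        (∀ c' : α → Matrix (Fin d) (Fin d) ℝ,
          (∀ i j, Measurable fun x => c' x i j) →
          (∀ᵐ x ∂τ, (c' x).PosSemidef ∧ (c' x).trace = 1) →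
          (∀ i j, ∀ A : Set α, MeasurableSet A → μ i j A = ∫ x in A, c' x i j ∂τ) →
          c =ᵐ[τ] c') := by
  -- diagonal nonnegativity
  have hdiag : ∀ i, ∀ A : Set α, MeasurableSet A → 0 ≤ μ i i A := fun i A hA =>
    psd_diag_nonneg (hpsd A hA) i
  -- symmetry
  have hsymm : ∀ i j, ∀ A : Set α, MeasurableSet A → μ j i A = μ i j A := fun i j A hA => by
    simpa using (hpsd A hA).1.apply i j
  refine ⟨hdiag, ?_⟩
  -- the trace measure
  have hle : ∀ i, 0 ≤[Set.univ] (μ i i : VectorMeasure α ℝ) := fun i =>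
    (VectorMeasure.le_restrict_univ_iff_le _ _).2
      ((VectorMeasure.le_iff).2 fun A hA => hdiag i A hA)
  set ν : Fin d → Measure α := fun i =>
    (μ i i).toMeasureOfZeroLE Set.univ MeasurableSet.univ (hle i) with hν
  have hνA : ∀ i, ∀ A : Set α, MeasurableSet A → ν i A = ENNReal.ofReal (μ i i A) := by
    intro i A hA
    rw [hν]
    rw [SignedMeasure.toMeasureOfZeroLE_apply _ (hle i) MeasurableSet.univ hA]
    rw [ENNReal.ofReal]
    congr 1
    rw [Real.toNNReal_of_nonneg (hdiag i A hA)]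
    simp [Set.univ_inter]
  set τ : Measure α := ∑ i, ν i with hτ
  have hτA : ∀ A : Set α, MeasurableSet A → τ A = ENNReal.ofReal (∑ i, μ i i A) := by
    intro A hA
    rw [hτ]
    rw [show ((∑ i, ν i : Measure α)) A = ∑ i, ν i A by
      rw [Measure.coe_finset_sum]; simp]
    rw [ENNReal.ofReal_sum_of_nonneg (fun i _ => hdiag i A hA)]
    exact Finset.sum_congr rfl fun i _ => hνA i A hA
  haveI hfin : IsFiniteMeasure τ := by
    constructor
    rw [hτA Set.univ MeasurableSet.univ]
    exact ENNReal.ofReal_lt_top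
  -- absolute continuity
  have hAC : ∀ i j, ∀ A : Set α, MeasurableSet A → τ A = 0 → μ i j A = 0 := by
    intro i j A hA h0
    rw [hτA A hA, ENNReal.ofReal_eq_zero] at h0
    have hsum0 : ∑ k, μ k k A = 0 :=
      le_antisymm h0 (Finset.sum_nonneg fun k _ => hdiag k A hA)
    have hkk : ∀ k, μ k k A = 0 := by
      intro k
      have := (Finset.sum_eq_zero_iff_of_nonneg (fun k _ => hdiag k A hA)).1 hsum0
      exact this k (Finset.mem_univ k)
    exact psd_offdiag_zero (hpsd A hA) (hkk i) (hkk j)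
  refine ⟨τ, hfin, hτA, hAC, ?_⟩
  -- Radon–Nikodym derivatives
  have hac : ∀ i j, μ i j ≪ᵥ τ.toENNRealVectorMeasure := fun i j =>
    VectorMeasure.AbsolutelyContinuous.mk fun A hA h0 =>
      hAC i j A hA (by rwa [MeasureTheory.Measure.toENNRealVectorMeasure_apply_measurable hA] at h0)
  set f : Fin d → Fin d → α → ℝ := fun i j => (μ i j).rnDeriv τ with hf
  have hfmeas : ∀ i j, Measurable (f i j) := fun i j => SignedMeasure.measurable_rnDeriv _ _
  have hfint : ∀ i j, Integrable (f i j) τ := fun i j => SignedMeasure.integrable_rnDeriv _ _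
  have hrep : ∀ i j, ∀ A : Set α, MeasurableSet A → μ i j A = ∫ x in A, f i j x ∂τ := by
    intro i j A hA
    conv_lhs => rw [← (μ i j).withDensityᵥ_rnDeriv_eq τ (hac i j)]
    rw [withDensityᵥ_apply (hfint i j) hA]
  -- the density matrix
  set c : α → Matrix (Fin d) (Fin d) ℝ := fun x => Matrix.of fun i j => f i j x with hc
  have hcmeas : ∀ i j, Measurable fun x => c x i j := fun i j => hfmeas i j
  -- a.e. symmetry
  have hsymae : ∀ᵐ x ∂τ, ∀ i j, f i j x = f j i x := by
    rw [ae_all_iff]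
    intro i
    rw [ae_all_iff]
    intro j
    exact Integrable.ae_eq_of_forall_setIntegral_eq _ _ (hfint i j) (hfint j i)
      fun A hA _ => by rw [← hrep i j A hA, ← hrep j i A hA, hsymm j i A hA]
  -- a.e. trace one
  have htrae : ∀ᵐ x ∂τ, ∑ i, f i i x = 1 := by
    have h := Integrable.ae_eq_of_forall_setIntegral_eq (fun x => ∑ i, f i i x)
      (fun _ => (1 : ℝ)) (integrable_finset_sum _ fun i _ => hfint i i) (integrable_const 1)
      (fun A hA hAfin => ?_)
    · exact h
    rw [integral_finset_sum _ fun i _ => (hfint i i).integrableOn, setIntegral_const,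
      smul_eq_mul, mul_one]
    have h1 : ∑ i, ∫ x in A, f i i x ∂τ = ∑ i, μ i i A :=
      Finset.sum_congr rfl fun i _ => (hrep i i A hA).symm
    rw [h1, measureReal_def, hτA A hA, ENNReal.toReal_ofReal (Finset.sum_nonneg fun i _ => hdiag i A hA)]
  -- a.e. nonnegativity of quadratic forms over a countable dense set
  obtain ⟨D, hDc, hDd⟩ := TopologicalSpace.exists_countable_dense (Fin d → ℝ)
  have hquadae : ∀ᵐ x ∂τ, ∀ v ∈ D, 0 ≤ ∑ i, ∑ j, v i * v j * f i j x := by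
    rw [ae_ball_iff hDc]
    intro v _
    refine ae_nonneg_of_forall_setIntegral_nonneg ?_ ?_
    · exact integrable_finset_sum _ fun i _ =>
        integrable_finset_sum _ fun j _ => (hfint i j).const_mul _
    · intro A hA _
      rw [integral_finset_sum _ fun i _ =>
        (integrable_finset_sum _ fun j _ => (hfint i j).const_mul _).integrableOn]
      have : ∀ i, ∫ x in A, (∑ j, v i * v j * f i j x) ∂τ = ∑ j, v i * v j * μ i j A := by
        intro i
        rw [integral_finset_sum _ fun j _ => ((hfint i j).const_mul _).integrableOn]
        exact Finset.sum_congr rfl fun j _ => by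
          rw [MeasureTheory.integral_const_mul, ← hrep i j A hA]
      rw [Finset.sum_congr rfl fun i _ => this i]
      have hq := (hpsd A hA).dotProduct_mulVec_nonneg v
      rw [star_trivial] at hq
      rwa [dot_expand] at hq
  -- combine the a.e. properties
  have hmain : ∀ᵐ x ∂τ, (c x).PosSemidef ∧ (c x).trace = 1 := by
    filter_upwards [hsymae, htrae, hquadae] with x hs ht hq
    have hherm : (c x).IsHermitian := by
      refine Matrix.IsHermitian.ext fun i j => ?_
      simpa [hc] using (hs j i)
    have hquad : ∀ v : Fin d → ℝ, 0 ≤ dotProduct v ((c x).mulVec v) := by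
      have hclosed : IsClosed {v : Fin d → ℝ | 0 ≤ dotProduct v ((c x).mulVec v)} :=
        isClosed_le continuous_const (quad_continuous (c x))
      have hsub : D ⊆ {v : Fin d → ℝ | 0 ≤ dotProduct v ((c x).mulVec v)} := by
        intro v hv
        rw [Set.mem_setOf_eq, dot_expand]
        exact hq v hv
      intro v
      have : v ∈ closure D := hDd v
      have h2 : closure D ⊆ {v : Fin d → ℝ | 0 ≤ dotProduct v ((c x).mulVec v)} := by
        rw [← hclosed.closure_eq]
        exact closure_mono hsub
      exact h2 this
    refine ⟨.of_dotProduct_mulVec_nonneg hherm fun v => by simpa [star_trivial] using hquad v, ?_⟩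
    simp only [Matrix.trace, Matrix.diag]
    exact ht
  refine ⟨c, hcmeas, hmain, fun i j A hA => hrep i j A hA, ?_⟩
  -- uniqueness
  intro c' hc'meas hc'ae hc'rep
  have hbound : ∀ i j, ∀ᵐ x ∂τ, ‖c' x i j‖ ≤ 1 := by
    intro i j
    filter_upwards [hc'ae] with x hx
    rw [Real.norm_eq_abs]
    exact psd_entry_bound hx.1 hx.2 i j
  have hc'int : ∀ i j, Integrable (fun x => c' x i j) τ := fun i j =>
    Integrable.mono' (integrable_const 1) (hc'meas i j).aestronglyMeasurable (hbound i j)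
  have hentry : ∀ i j, (fun x => c x i j) =ᵐ[τ] fun x => c' x i j := by
    intro i j
    exact Integrable.ae_eq_of_forall_setIntegral_eq _ _ (hfint i j) (hc'int i j)
      fun A hA _ => by
        simp only [hc, Matrix.of_apply]
        rw [← hrep i j A hA, ← hc'rep i j A hA]
  have : ∀ᵐ x ∂τ, ∀ i j, c x i j = c' x i j := by
    rw [ae_all_iff]
    intro i
    rw [ae_all_iff]
    intro j
    exact hentry i j
  filter_upwards [this] with x hx
  exact Matrix.ext fun i j => hx i j
end

section
/- Let (Ω, 𝒜) be a measurable space, let m ⊆ 𝒜 be a sub-σ-algebra, let P₁ and P₂ be probability measures on (Ω, 𝒜) that agree on m, and let B ∈ m. Define P̄ := (P₁ restricted to B) + (P₂ restricted to Bᶜ), i.e., P̄(A) = P₁(A ∩ B) + P₂(A ∩ Bᶜ). Then P̄ is a probability measure on (Ω, 𝒜) that agrees with P₁ (and P₂) on m, and for every f : Ω → ℝ that is integrable with respect to both P₁ and P₂, f is P̄-integrable and the conditional expectations satisfy E^{P̄}[f | m] = 1_B · E^{P₁}[f | m] + 1_{Bᶜ} · E^{P₂}[f | m], P̄-almost everywhere.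 -/
set_option maxHeartbeats 1000000


open MeasureTheory Set

/-- The measure-pasting identity of Step 3 of the proof of Theorem 2.4 of the paper: pasting two
probability measures agreeing on a sub-σ-algebra `m` along an `m`-measurable set `B` yields a
probability measure agreeing with both on `m`, whose conditional expectation given `m` is the
corresponding indicator combination. -/
theorem pasting_measures_condexp
    {Ω : Type*} {m mΩ : MeasurableSpace Ω} (hm : m ≤ mΩ)
    (P₁ P₂ : @Measure Ω mΩ) [IsProbabilityMeasure P₁] [IsProbabilityMeasure P₂]
    (hagree : ∀ s : Set Ω, MeasurableSet[m] s → P₁ s = P₂ s)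
    {B : Set Ω} (hB : MeasurableSet[m] B) :
    IsProbabilityMeasure (P₁.restrict B + P₂.restrict Bᶜ) ∧
    (∀ s : Set Ω, MeasurableSet[m] s → (P₁.restrict B + P₂.restrict Bᶜ) s = P₁ s) ∧
    ∀ f : Ω → ℝ, Integrable f P₁ → Integrable f P₂ →
      Integrable f (P₁.restrict B + P₂.restrict Bᶜ) ∧
      (P₁.restrict B + P₂.restrict Bᶜ)[f|m] =ᵐ[P₁.restrict B + P₂.restrict Bᶜ]
        (B.indicator (P₁[f|m]) + Bᶜ.indicator (P₂[f|m])) := by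
  have hBm : MeasurableSet B := hm _ hB
  set P : Measure Ω := P₁.restrict B + P₂.restrict Bᶜ with hPdef
  have hagree' : ∀ s : Set Ω, MeasurableSet[m] s → P s = P₁ s := by
    intro s hs
    have hsm : MeasurableSet s := hm _ hs
    have h2 : P₂ (s ∩ Bᶜ) = P₁ (s ∩ Bᶜ) :=
      (hagree _ (hs.inter hB.compl)).symm
    have h3 : P₁ (s ∩ B) + P₁ (s \ B) = P₁ s := measure_inter_add_diff s hBm
    simp only [hPdef, Measure.add_apply, Measure.restrict_apply hsm, h2]
    rw [← h3, Set.diff_eq]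
  have hprob : IsProbabilityMeasure P := by
    constructor
    rw [hagree' univ MeasurableSet.univ]
    exact measure_univ
  haveI := hprob
  refine ⟨hprob, hagree', ?_⟩
  intro f hf1 hf2
  have hfP : Integrable f P := (hf1.restrict).add_measure (hf2.restrict)
  set E₁ := P₁[f|m] with hE₁
  set E₂ := P₂[f|m] with hE₂
  set g := B.indicator E₁ + Bᶜ.indicator E₂ with hgdef
  -- a.e. equality of g with E₁ on sets inside B, and with E₂ inside Bᶜ
  have hg1 : ∀ {s : Set Ω}, MeasurableSet s → s ⊆ B → g =ᵐ[P₁.restrict s] E₁ := by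
    intro s hsm hsB
    filter_upwards [ae_restrict_mem hsm] with x hx
    have hxB : x ∈ B := hsB hx
    have hxBc : x ∉ Bᶜ := by simpa using hxB
    simp [hgdef, Set.indicator_of_mem hxB, Set.indicator_of_notMem hxBc]
  have hg2 : ∀ {s : Set Ω}, MeasurableSet s → s ⊆ Bᶜ → g =ᵐ[P₂.restrict s] E₂ := by
    intro s hsm hsB
    filter_upwards [ae_restrict_mem hsm] with x hx
    have hxB : x ∈ Bᶜ := hsB hx
    have hxB' : x ∉ B := hxB
    simp [hgdef, Set.indicator_of_mem hxB, Set.indicator_of_notMem hxB']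
  have hg_intB : Integrable g (P₁.restrict B) :=
    (integrable_condExp.restrict).congr (hg1 hBm (le_refl B)).symm
  have hg_intBc : Integrable g (P₂.restrict Bᶜ) :=
    (integrable_condExp.restrict).congr (hg2 hBm.compl (le_refl Bᶜ)).symm
  have hgint : Integrable g P := hg_intB.add_measure hg_intBc
  have hf_intB : Integrable f (P₁.restrict B) := hf1.restrict
  have hf_intBc : Integrable f (P₂.restrict Bᶜ) := hf2.restrict
  have hgm : StronglyMeasurable[m] g :=
    ((stronglyMeasurable_condExp).indicator hB).add
      ((stronglyMeasurable_condExp).indicator hB.compl)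
  have key : ∀ s : Set Ω, MeasurableSet[m] s →
      ∫ x in s, g x ∂P = ∫ x in s, f x ∂P := by
    intro s hs
    have hsm : MeasurableSet s := hm _ hs
    have hrB : (P₁.restrict B).restrict s = P₁.restrict (s ∩ B) := by
      rw [Measure.restrict_restrict hsm]
    have hrBc : (P₂.restrict Bᶜ).restrict s = P₂.restrict (s ∩ Bᶜ) := by
      rw [Measure.restrict_restrict hsm]
    have hg_left : ∫ x in s, g x ∂(P₁.restrict B) = ∫ x in s ∩ B, f x ∂P₁ := by
      rw [hrB, integral_congr_ae (hg1 (hsm.inter hBm) Set.inter_subset_right)]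
      exact setIntegral_condExp hm hf1 (hs.inter hB)
    have hg_right : ∫ x in s, g x ∂(P₂.restrict Bᶜ) = ∫ x in s ∩ Bᶜ, f x ∂P₂ := by
      rw [hrBc, integral_congr_ae (hg2 (hsm.inter hBm.compl) Set.inter_subset_right)]
      exact setIntegral_condExp hm hf2 (hs.inter hB.compl)
    have hf_left : ∫ x in s, f x ∂(P₁.restrict B) = ∫ x in s ∩ B, f x ∂P₁ := by
      rw [hrB]
    have hf_right : ∫ x in s, f x ∂(P₂.restrict Bᶜ) = ∫ x in s ∩ Bᶜ, f x ∂P₂ := by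
      rw [hrBc]
    calc ∫ x in s, g x ∂P
        = ∫ x in s, g x ∂(P₁.restrict B) + ∫ x in s, g x ∂(P₂.restrict Bᶜ) := by
          rw [hPdef, Measure.restrict_add]
          exact integral_add_measure hg_intB.restrict hg_intBc.restrict
      _ = ∫ x in s ∩ B, f x ∂P₁ + ∫ x in s ∩ Bᶜ, f x ∂P₂ := by rw [hg_left, hg_right]
      _ = ∫ x in s, f x ∂(P₁.restrict B) + ∫ x in s, f x ∂(P₂.restrict Bᶜ) := by
          rw [hf_left, hf_right]
      _ = ∫ x in s, f x ∂P := by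
          rw [hPdef, Measure.restrict_add]
          exact (integral_add_measure hf_intB.restrict hf_intBc.restrict).symm
  refine ⟨hfP, ?_⟩
  exact (ae_eq_condExp_of_forall_setIntegral_eq hm hfP
    (fun s hs _ => hgint.integrableOn)
    (fun s hs _ => key s hs)
    (hgm.aestronglyMeasurable)).symm
end

section
/- Let (Ω, 𝒜) be a measurable space, let m ⊆ 𝒜 be a sub-σ-algebra, let P₁ and P₂ be probability measures on (Ω, 𝒜) that agree on m, and let f : Ω → ℝ be integrable with respect to both P₁ and P₂. Then there exists a probability measure P̄ on (Ω, 𝒜) that agrees with P₁ (and P₂) on m, such that f is P̄-integrable and E^{P̄}[f | m] ≥ max( E^{P₁}[f | m], E^{P₂}[f | m] ), P̄-almost everywhere. -/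
open MeasureTheory Set

/-- Upward directedness (Step 3 of the proof of Theorem 2.4 of the paper): given two probability
measures agreeing on a sub-σ-algebra `m` and a function integrable with respect to both, there is
a probability measure agreeing with them on `m` whose conditional expectation given `m` dominates
the maximum of the two conditional expectations. -/
theorem exists_pasting_condexp_ge_max
    {Ω : Type*} {m mΩ : MeasurableSpace Ω} (hm : m ≤ mΩ)
    (P₁ P₂ : @Measure Ω mΩ) [IsProbabilityMeasure P₁] [IsProbabilityMeasure P₂]
    (hagree : ∀ s : Set Ω, MeasurableSet[m] s → P₁ s = P₂ s)
    (f : Ω → ℝ) (hf₁ : Integrable f P₁) (hf₂ : Integrable f P₂) :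
    ∃ Pb : @Measure Ω mΩ, IsProbabilityMeasure Pb ∧
      (∀ s : Set Ω, MeasurableSet[m] s → Pb s = P₁ s) ∧
      Integrable f Pb ∧
      ∀ᵐ ω ∂Pb, max ((P₁[f|m]) ω) ((P₂[f|m]) ω) ≤ (Pb[f|m]) ω := by
  set g₁ : Ω → ℝ := P₁[f|m] with hg₁def
  set g₂ : Ω → ℝ := P₂[f|m] with hg₂def
  have hg₁m : StronglyMeasurable[m] g₁ := stronglyMeasurable_condExp
  have hg₂m : StronglyMeasurable[m] g₂ := stronglyMeasurable_condExp
  set B : Set Ω := {ω | g₂ ω ≤ g₁ ω} with hBdef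
  have hB : MeasurableSet[m] B := measurableSet_le hg₂m.measurable hg₁m.measurable
  have hBΩ : MeasurableSet B := hm _ hB
  set Pb : @Measure Ω mΩ := P₁.restrict B + P₂.restrict Bᶜ with hPbdef
  -- Pb agrees with P₁ on m
  have hPbs : ∀ s : Set Ω, MeasurableSet[m] s → Pb s = P₁ s := by
    intro s hs
    have hsΩ : MeasurableSet s := hm _ hs
    have h1 : Pb s = P₁ (s ∩ B) + P₂ (s ∩ Bᶜ) := by
      simp [hPbdef, Measure.restrict_apply hsΩ]
    have h2 : P₂ (s ∩ Bᶜ) = P₁ (s ∩ Bᶜ) := (hagree _ (hs.inter hB.compl)).symm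
    have h3 : s ∩ Bᶜ = s \ B := (diff_eq s B).symm
    rw [h1, h2, h3, measure_inter_add_diff s hBΩ]
  have hPbprob : IsProbabilityMeasure Pb :=
    ⟨by rw [hPbs univ MeasurableSet.univ]; exact measure_univ⟩
  haveI := hPbprob
  -- integrability of f wrt Pb
  have hfPb : Integrable f Pb := by
    rw [hPbdef]
    exact (integrable_add_measure).2 ⟨hf₁.restrict, hf₂.restrict⟩
  -- the candidate function
  set h : Ω → ℝ := fun ω => max (g₁ ω) (g₂ ω) with hhdef
  -- h agrees with g₁ on B and with g₂ on Bᶜ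
  have hhB : ∀ ω ∈ B, h ω = g₁ ω := fun ω hω => max_eq_left hω
  have hhBc : ∀ ω ∈ Bᶜ, h ω = g₂ ω := fun ω hω =>
    max_eq_right (le_of_lt (lt_of_not_ge hω))
  have hh1 : h =ᵐ[P₁.restrict B] g₁ := by
    filter_upwards [ae_restrict_mem hBΩ] with ω hω using hhB ω hω
  have hh2 : h =ᵐ[P₂.restrict Bᶜ] g₂ := by
    filter_upwards [ae_restrict_mem hBΩ.compl] with ω hω using hhBc ω hω
  have hhint : Integrable h Pb := by
    rw [hPbdef]
    refine (integrable_add_measure).2 ⟨?_, ?_⟩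
    · exact (integrable_condExp.restrict (s := B)).congr hh1.symm
    · exact (integrable_condExp.restrict (s := Bᶜ)).congr hh2.symm
  -- set-integral identity
  have hset : ∀ s : Set Ω, MeasurableSet[m] s → Pb s < ⊤ →
      ∫ x in s, h x ∂Pb = ∫ x in s, f x ∂Pb := by
    intro s hs _
    have hsΩ : MeasurableSet s := hm _ hs
    have hrestr : Pb.restrict s = P₁.restrict (s ∩ B) + P₂.restrict (s ∩ Bᶜ) := by
      rw [hPbdef, Measure.restrict_add, Measure.restrict_restrict hsΩ,
        Measure.restrict_restrict hsΩ]
    have hhsum : ∫ x in s, h x ∂Pb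
        = ∫ x in s ∩ B, h x ∂P₁ + ∫ x in s ∩ Bᶜ, h x ∂P₂ := by
      rw [hrestr]
      exact integral_add_measure
        ((integrable_condExp.restrict).congr
          (by filter_upwards [ae_restrict_mem (hsΩ.inter hBΩ)] with ω hω
              using (hhB ω hω.2).symm))
        ((integrable_condExp.restrict).congr
          (by filter_upwards [ae_restrict_mem (hsΩ.inter hBΩ.compl)] with ω hω
              using (hhBc ω hω.2).symm))
    have hfsum : ∫ x in s, f x ∂Pb
        = ∫ x in s ∩ B, f x ∂P₁ + ∫ x in s ∩ Bᶜ, f x ∂P₂ := by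
      rw [hrestr]
      exact integral_add_measure hf₁.restrict hf₂.restrict
    have e1 : ∫ x in s ∩ B, h x ∂P₁ = ∫ x in s ∩ B, f x ∂P₁ := by
      rw [setIntegral_congr_ae (hsΩ.inter hBΩ) (ae_of_all _ (fun ω hω => hhB ω hω.2))]
      exact setIntegral_condExp hm hf₁ (hs.inter hB)
    have e2 : ∫ x in s ∩ Bᶜ, h x ∂P₂ = ∫ x in s ∩ Bᶜ, f x ∂P₂ := by
      rw [setIntegral_congr_ae (hsΩ.inter hBΩ.compl) (ae_of_all _ (fun ω hω => hhBc ω hω.2))]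
      exact setIntegral_condExp hm hf₂ (hs.inter hB.compl)
    rw [hhsum, hfsum, e1, e2]
  have hmax : StronglyMeasurable[m] h := by
    letI : MeasurableSpace Ω := m
    exact hg₁m.sup hg₂m
  have hmeas : AEStronglyMeasurable[m] h Pb := hmax.aestronglyMeasurable
  have hcond : h =ᵐ[Pb] Pb[f|m] :=
    ae_eq_condExp_of_forall_setIntegral_eq hm hfPb
      (fun s _ _ => hhint.integrableOn) hset hmeas
  refine ⟨Pb, hPbprob, hPbs, hfPb, ?_⟩
  filter_upwards [hcond] with ω hω
  rw [← hω]
end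

section
/- Let Ω be a standard Borel measurable space with σ-algebra 𝒜, let P be a probability measure on Ω, let ℱ = (ℱ_s)_{s ∈ [0,∞)} be a filtration of sub-σ-algebras of 𝒜 such that each ℱ_s is countably generated, and write ℱ_{s+} := ⋂_{u > s} ℱ_u. Let M : [0,∞) → Ω → ℝ be a process adapted to (ℱ_{s+})_s such that every path s ↦ M_s(ω) is right-continuous, each M_s is P-integrable, the family {M_s | s ∈ [0,∞)} is uniformly integrable under P, and M is a martingale with respect to (ℱ_{s+})_s under P (i.e., E^P[M_u | ℱ_{s+}] = M_s P-a.s. for all s ≤ u). Fix t ∈ [0,∞) and let κ(ω) := condExpKernel P ℱ_t (ω) be the regular conditional probability of P given ℱ_t. Then for P-almost every ω: for all t ≤ r ≤ u, M_u is κ(ω)-integrable and E^{κ(ω)}[M_u | ℱ_{r+}] = M_r, κ(ω)-almost everywhere; that is, (M_{t+s})_{s ≥ 0} is a martingale with respect to (ℱ_{(t+s)+})_{s ≥ 0} under κ(ω). -/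
open MeasureTheory ProbabilityTheory
open scoped ENNReal NNReal

/-- The right-continuous modification `ℱ_{s+} := ⋂_{u > s} ℱ_u` of a filtration. -/
def filtrationRightLimit {Ω : Type*} {mΩ : MeasurableSpace Ω}
    (ℱ : Filtration ℝ≥0 mΩ) (s : ℝ≥0) : MeasurableSpace Ω :=
  ⨅ u ∈ Set.Ioi s, ℱ u

section Basic

variable {Ω : Type*} {mΩ : MeasurableSpace Ω} (ℱ : Filtration ℝ≥0 mΩ)

lemma filtrationRightLimit_le (s : ℝ≥0) : filtrationRightLimit ℱ s ≤ mΩ :=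
  le_trans (iInf₂_le (s + 1) (Set.mem_Ioi.2 (lt_add_of_pos_right s one_pos))) (ℱ.le _)

lemma le_filtrationRightLimit (s : ℝ≥0) : ℱ s ≤ filtrationRightLimit ℱ s :=
  le_iInf₂ fun u hu => ℱ.mono (le_of_lt hu)

lemma filtrationRightLimit_le_of_lt {s u : ℝ≥0} (h : s < u) :
    filtrationRightLimit ℱ s ≤ ℱ u := iInf₂_le u h

end Basic

lemma countable_generatePiSystem_aux {Ω : Type*} {S : Set (Set Ω)} (hS : S.Countable) :
    (generatePiSystem S).Countable := by
  have hsub : generatePiSystem S ⊆ (fun F : Set (Set Ω) => ⋂₀ F) ''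
      {F | F.Finite ∧ F ⊆ S} := by
    intro A hA
    induction hA with
    | @base s hs =>
        exact ⟨{s}, ⟨Set.finite_singleton s, Set.singleton_subset_iff.2 hs⟩,
          Set.sInter_singleton s⟩
    | @inter s u hs hu hne ihs ihu =>
        obtain ⟨F, ⟨hF1, hF2⟩, rfl⟩ := ihs
        obtain ⟨G, ⟨hG1, hG2⟩, rfl⟩ := ihu
        exact ⟨F ∪ G, ⟨hF1.union hG1, Set.union_subset hF2 hG2⟩, Set.sInter_union F G⟩
  exact (((Set.countable_setOf_finite_subset hS).image _).mono hsub)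

lemma setIntegral_eq_of_generateFrom {Ω : Type*} {m' mΩ : MeasurableSpace Ω} (hm' : m' ≤ mΩ)
    (μ : Measure Ω) [IsFiniteMeasure μ]
    {S : Set (Set Ω)}
    (hgen : m' = MeasurableSpace.generateFrom S) (hpi : IsPiSystem S)
    {f g : Ω → ℝ} (hf : Integrable f μ) (hg : Integrable g μ)
    (hS : ∀ A ∈ S, ∫ x in A, f x ∂μ = ∫ x in A, g x ∂μ)
    (huniv : ∫ x, f x ∂μ = ∫ x, g x ∂μ) :
    ∀ A : Set Ω, MeasurableSet[m'] A → ∫ x in A, f x ∂μ = ∫ x in A, g x ∂μ := by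
  intro A hA
  refine MeasurableSpace.induction_on_inter (m := m')
    (C := fun A _ => ∫ x in A, f x ∂μ = ∫ x in A, g x ∂μ) hgen hpi (by simp) hS ?_ ?_ A hA
  · intro B hB hBeq
    have hB' : MeasurableSet[mΩ] B := hm' _ hB
    have h1 := integral_add_compl hB' hf
    have h2 := integral_add_compl hB' hg
    linarith
  · intro u hdisj hmeas heq
    rw [integral_iUnion (fun i => hm' _ (hmeas i)) hdisj hf.integrableOn,
      integral_iUnion (fun i => hm' _ (hmeas i)) hdisj hg.integrableOn]
    exact tsum_congr heq

section Kernel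

variable {Ω : Type*}

lemma ae_setIntegral_condExpKernel_eq {m' : MeasurableSpace Ω}
    [mΩ : MeasurableSpace Ω] [StandardBorelSpace Ω]
    (P : Measure Ω) [IsProbabilityMeasure P] (ℱ : Filtration ℝ≥0 mΩ)
    (M : ℝ≥0 → Ω → ℝ)
    (hint : ∀ s : ℝ≥0, Integrable (M s) P)
    (hmart : ∀ s u : ℝ≥0, s ≤ u → P[M u|filtrationRightLimit ℱ s] =ᵐ[P] M s)
    (t p p' : ℝ≥0) (htp : t ≤ p) (hpp' : p ≤ p')
    (hm' : m' ≤ filtrationRightLimit ℱ p)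
    (hcg' : @MeasurableSpace.CountablyGenerated Ω m') :
    ∀ᵐ ω ∂P, ∀ A : Set Ω, MeasurableSet[m'] A →
      ∫ x in A, M p' x ∂(condExpKernel P (ℱ t) ω)
        = ∫ x in A, M p x ∂(condExpKernel P (ℱ t) ω) := by
  have hGp : filtrationRightLimit ℱ p ≤ mΩ := filtrationRightLimit_le ℱ p
  have key : ∀ A : Set Ω, MeasurableSet[m'] A →
      ∀ᵐ ω ∂P, ∫ x in A, M p' x ∂(condExpKernel P (ℱ t) ω)
        = ∫ x in A, M p x ∂(condExpKernel P (ℱ t) ω) := by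
    intro A hA
    have hAG : MeasurableSet[filtrationRightLimit ℱ p] A := hm' _ hA
    have hAΩ : MeasurableSet A := hGp _ hAG
    have hf : Integrable (A.indicator (M p')) P := (hint p').indicator hAΩ
    have hg : Integrable (A.indicator (M p)) P := (hint p).indicator hAΩ
    have h1 : P[A.indicator (M p')|ℱ t]
        =ᵐ[P] fun ω => ∫ y, A.indicator (M p') y ∂(condExpKernel P (ℱ t) ω) :=
      condExp_ae_eq_integral_condExpKernel (ℱ.le t) hf
    have h2 : P[A.indicator (M p)|ℱ t]
        =ᵐ[P] fun ω => ∫ y, A.indicator (M p) y ∂(condExpKernel P (ℱ t) ω) :=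
      condExp_ae_eq_integral_condExpKernel (ℱ.le t) hg
    have hle1 : ℱ t ≤ filtrationRightLimit ℱ p :=
      le_trans (ℱ.mono htp) (le_filtrationRightLimit ℱ p)
    have e2 : P[A.indicator (M p')|filtrationRightLimit ℱ p] =ᵐ[P] A.indicator (M p) := by
      refine (condExp_indicator (hint p') hAG).trans ?_
      filter_upwards [hmart p p' hpp'] with x hx
      by_cases hxA : x ∈ A <;>
        simp [Set.indicator_of_mem, Set.indicator_of_notMem, hxA, hx]
    have htower : P[A.indicator (M p')|ℱ t] =ᵐ[P] P[A.indicator (M p)|ℱ t] :=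
      ((condExp_condExp_of_le hle1 hGp).symm.trans (condExp_congr_ae e2))
    filter_upwards [h1, h2, htower] with ω hω1 hω2 hω3
    rw [← integral_indicator hAΩ, ← integral_indicator hAΩ, ← hω1, ← hω2]
    exact hω3
  haveI := hcg'
  set S₀ := @MeasurableSpace.countableGeneratingSet Ω m' hcg' with hS₀
  set S := generatePiSystem S₀ with hSdef
  have hgen : m' = MeasurableSpace.generateFrom S := by
    rw [hSdef, generateFrom_generatePiSystem_eq, hS₀,
      @MeasurableSpace.generateFrom_countableGeneratingSet Ω m' hcg']
  have hScnt : S.Countable :=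
    countable_generatePiSystem_aux
      (@MeasurableSpace.countable_countableGeneratingSet Ω m' hcg')
  have hmemS : ∀ A ∈ S, MeasurableSet[m'] A := by
    intro A hA
    rw [hgen]
    exact MeasurableSpace.measurableSet_generateFrom hA
  have hall : ∀ᵐ ω ∂P, ∀ A ∈ S,
      ∫ x in A, M p' x ∂(condExpKernel P (ℱ t) ω)
        = ∫ x in A, M p x ∂(condExpKernel P (ℱ t) ω) :=
    (ae_ball_iff hScnt).2 fun A hA => key A (hmemS A hA)
  filter_upwards [hall, key Set.univ MeasurableSet.univ,
    (hint p).condExpKernel_ae (m := ℱ t), (hint p').condExpKernel_ae (m := ℱ t)]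
    with ω hω1 hω2 hω3 hω4
  exact setIntegral_eq_of_generateFrom (le_trans hm' hGp) (condExpKernel P (ℱ t) ω)
    hgen (isPiSystem_generatePiSystem S₀) hω4 hω3 hω1 (by simpa using hω2)

end Kernel

lemma key_limit {Ω : Type*} [mΩ : MeasurableSpace Ω]
    (ℱ : Filtration ℝ≥0 mΩ) (M : ℝ≥0 → Ω → ℝ)
    (hadapted : ∀ s : ℝ≥0, Measurable[filtrationRightLimit ℱ s] (M s))
    (hrc : ∀ ω : Ω, ∀ s : ℝ≥0, ContinuousWithinAt (fun u => M u ω) (Set.Ici s) s)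
    (μ : Measure Ω) [IsProbabilityMeasure μ]
    (h1 : ∀ q : ℚ, Integrable (M (Real.toNNReal q)) μ)
    (t : ℝ≥0)
    (h2 : ∀ q q' : ℚ, t ≤ Real.toNNReal q → Real.toNNReal q ≤ Real.toNNReal q' →
      ∀ A : Set Ω, MeasurableSet[ℱ (Real.toNNReal q)] A →
        ∫ x in A, M (Real.toNNReal q') x ∂μ = ∫ x in A, M (Real.toNNReal q) x ∂μ)
    (h3 : ∀ q q' : ℚ, t ≤ Real.toNNReal q → Real.toNNReal q ≤ Real.toNNReal q' →
      ∀ A : Set Ω,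
        MeasurableSet[MeasurableSpace.comap (M (Real.toNNReal q)) Real.measurableSpace] A →
        ∫ x in A, M (Real.toNNReal q') x ∂μ = ∫ x in A, M (Real.toNNReal q) x ∂μ)
    (s : ℝ≥0) (hts : t ≤ s) (q₀ : ℚ) (hq₀ : s < Real.toNNReal q₀)
    (A : Set Ω) (hA : MeasurableSet A)
    (hAmem : ∀ q : ℚ, s < Real.toNNReal q → MeasurableSet[ℱ (Real.toNNReal q)] A) :
    Integrable (M s) μ ∧ ∫ x in A, M s x ∂μ = ∫ x in A, M (Real.toNNReal q₀) x ∂μ := by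
  have hMmeas : ∀ x : ℝ≥0, Measurable (M x) :=
    fun x => (hadapted x).mono (filtrationRightLimit_le ℱ x) le_rfl
  -- choose a rational sequence decreasing to s
  have hex : ∀ n : ℕ, ∃ q : ℚ, (s : ℝ) < q ∧
      (q : ℝ) < min ((Real.toNNReal q₀ : ℝ≥0) : ℝ) ((s : ℝ) + 1 / (n + 1)) := by
    intro n
    refine exists_rat_btwn (lt_min ?_ ?_)
    · exact_mod_cast hq₀
    · exact lt_add_of_pos_right _ (by positivity)
  choose v hv1 hv2 using hex
  have hspos : ∀ n, s < Real.toNNReal (v n) :=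
    fun n => Real.lt_toNNReal_iff_coe_lt.2 (hv1 n)
  have hvcoe : ∀ n, ((Real.toNNReal (v n) : ℝ≥0) : ℝ) = (v n : ℝ) :=
    fun n => Real.coe_toNNReal _ (le_of_lt (lt_of_le_of_lt s.coe_nonneg (hv1 n)))
  have hvq₀ : ∀ n, Real.toNNReal (v n) ≤ Real.toNNReal q₀ := by
    intro n
    rw [← NNReal.coe_le_coe, hvcoe n]
    exact le_trans (le_of_lt (hv2 n)) (min_le_left _ _)
  have htv : ∀ n, t ≤ Real.toNNReal (v n) := fun n => le_trans hts (le_of_lt (hspos n))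
  have htend : Filter.Tendsto (fun n => Real.toNNReal (v n)) Filter.atTop (nhds s) := by
    rw [← NNReal.tendsto_coe]
    have haux : Filter.Tendsto (fun n : ℕ => (s : ℝ) + 1 / (n + 1)) Filter.atTop
        (nhds (s : ℝ)) := by
      simpa using (tendsto_const_nhds (x := (s : ℝ))).add
        tendsto_one_div_add_atTop_nhds_zero_nat
    refine tendsto_of_tendsto_of_tendsto_of_le_of_le tendsto_const_nhds haux ?_ ?_
    · intro n
      show (s : ℝ) ≤ ((Real.toNNReal (v n) : ℝ≥0) : ℝ)
      rw [hvcoe n]; exact le_of_lt (hv1 n)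
    · intro n
      show ((Real.toNNReal (v n) : ℝ≥0) : ℝ) ≤ (s : ℝ) + 1 / (n + 1)
      rw [hvcoe n]; exact le_trans (le_of_lt (hv2 n)) (min_le_right _ _)
  -- conditional expectation representation
  have hrep : ∀ n, M (Real.toNNReal (v n)) =ᵐ[μ]
      μ[M (Real.toNNReal q₀)|MeasurableSpace.comap (M (Real.toNNReal (v n)))
        Real.measurableSpace] := by
    intro n
    have hm : MeasurableSpace.comap (M (Real.toNNReal (v n))) Real.measurableSpace ≤ mΩ :=
      (hMmeas _).comap_le
    have hmsm : Measurable[MeasurableSpace.comap (M (Real.toNNReal (v n)))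
        Real.measurableSpace] (M (Real.toNNReal (v n))) := Measurable.of_comap_le le_rfl
    refine ae_eq_condExp_of_forall_setIntegral_eq hm (h1 q₀)
      (fun B hB hBfin => (h1 (v n)).integrableOn)
      (fun B hB hBfin => (h3 (v n) q₀ (htv n) (hvq₀ n) B hB).symm)
      hmsm.stronglyMeasurable.aestronglyMeasurable
  -- uniform integrability
  have hUI : UniformIntegrable (fun n => M (Real.toNNReal (v n))) 1 μ := by
    have hUI' : UniformIntegrable (fun n : ℕ =>
        μ[M (Real.toNNReal q₀)|MeasurableSpace.comap (M (Real.toNNReal (v n)))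
          Real.measurableSpace]) 1 μ :=
      (h1 q₀).uniformIntegrable_condExp fun n => (hMmeas _).comap_le
    obtain ⟨hmeas', hunif, C, hC⟩ := hUI'
    refine ⟨fun n => (hMmeas _).aestronglyMeasurable,
      hunif.ae_eq fun n => (hrep n).symm, C, fun n => ?_⟩
    rw [eLpNorm_congr_ae (hrep n)]
    exact hC n
  -- pointwise convergence
  have hptw : ∀ x : Ω, Filter.Tendsto (fun n => M (Real.toNNReal (v n)) x)
      Filter.atTop (nhds (M s x)) := by
    intro x
    refine (hrc x s).tendsto.comp ?_
    rw [tendsto_nhdsWithin_iff]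
    exact ⟨htend, Filter.Eventually.of_forall fun n => le_of_lt (hspos n)⟩
  obtain ⟨hmeasUI, hunif, C, hC⟩ := hUI
  -- integrability of M s
  have hMs : Integrable (M s) μ := by
    refine memLp_one_iff_integrable.1 ⟨(hMmeas s).aestronglyMeasurable, ?_⟩
    have hbnd : eLpNorm (M s) 1 μ ≤ C := by
      rw [eLpNorm_one_eq_lintegral_enorm]
      have heq : ∀ x : Ω, (‖M s x‖₊ : ℝ≥0∞) =
          Filter.liminf (fun n => (‖M (Real.toNNReal (v n)) x‖₊ : ℝ≥0∞)) Filter.atTop := by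
        intro x
        have htendx : Filter.Tendsto (fun n => (‖M (Real.toNNReal (v n)) x‖₊ : ℝ≥0∞))
            Filter.atTop (nhds (‖M s x‖₊ : ℝ≥0∞)) :=
          (ENNReal.continuous_coe.tendsto _).comp ((continuous_nnnorm.tendsto _).comp (hptw x))
        exact htendx.liminf_eq.symm
      calc ∫⁻ x, (‖M s x‖₊ : ℝ≥0∞) ∂μ
          = ∫⁻ x, Filter.liminf
              (fun n => (‖M (Real.toNNReal (v n)) x‖₊ : ℝ≥0∞)) Filter.atTop ∂μ := by
            congr 1; funext x; exact heq x
        _ ≤ Filter.liminf (fun n => ∫⁻ x, (‖M (Real.toNNReal (v n)) x‖₊ : ℝ≥0∞) ∂μ)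
              Filter.atTop :=
            lintegral_liminf_le fun n => (hMmeas _).nnnorm.coe_nnreal_ennreal
        _ ≤ (C : ℝ≥0∞) := by
            refine Filter.liminf_le_of_le (by isBoundedDefault) ?_
            intro b hb
            obtain ⟨n, hn⟩ := hb.exists
            refine le_trans hn ?_
            refine le_trans (le_of_eq (eLpNorm_one_eq_lintegral_enorm
              (f := M (Real.toNNReal (v n))) (μ := μ)).symm) ?_
            exact hC n
    exact lt_of_le_of_lt hbnd ENNReal.coe_lt_top
  -- Vitali convergence
  have hLp : Filter.Tendsto
      (fun n => eLpNorm ((fun x => M (Real.toNNReal (v n)) x) - M s) 1 μ)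
      Filter.atTop (nhds 0) :=
    tendsto_Lp_finite_of_tendsto_ae le_rfl ENNReal.one_ne_top
      (fun n => (hMmeas _).aestronglyMeasurable) (memLp_one_iff_integrable.2 hMs) hunif
      (Filter.Eventually.of_forall hptw)
  have hsets : Filter.Tendsto (fun n => ∫ x in A, M (Real.toNNReal (v n)) x ∂μ)
      Filter.atTop (nhds (∫ x in A, M s x ∂μ)) := by
    refine tendsto_integral_of_L1 (μ := μ.restrict A) (M s) hMs.integrableOn.aestronglyMeasurable
      (Filter.Eventually.of_forall fun n => (h1 (v n)).integrableOn) ?_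
    have hle : ∀ n : ℕ, ∫⁻ x, ‖M (Real.toNNReal (v n)) x - M s x‖ₑ ∂(μ.restrict A)
        ≤ eLpNorm ((fun x => M (Real.toNNReal (v n)) x) - M s) 1 μ := by
      intro n
      rw [eLpNorm_one_eq_lintegral_enorm]
      exact lintegral_mono' Measure.restrict_le_self le_rfl
    exact tendsto_of_tendsto_of_tendsto_of_le_of_le tendsto_const_nhds hLp
      (fun n => by positivity) hle
  have hconst : (fun n => ∫ x in A, M (Real.toNNReal (v n)) x ∂μ) =
      fun _ => ∫ x in A, M (Real.toNNReal q₀) x ∂μ :=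
    funext fun n => (h2 (v n) q₀ (htv n) (hvq₀ n) A (hAmem (v n) (hspos n))).symm
  rw [hconst] at hsets
  exact ⟨hMs, tendsto_nhds_unique hsets tendsto_const_nhds⟩

/-- Claim (i) in the proof of Lemma 3.4 of the paper: a right-continuous, uniformly integrable
martingale `M` with respect to the right-continuous modification `(ℱ_{s+})` of a filtration with
countably generated σ-algebras remains, for `P`-a.e. `ω`, a martingale on `[t, ∞)` with respect to
`(ℱ_{r+})_{r ≥ t}` under the regular conditional probability `condexpKernel P (ℱ t) ω` of `P`
given `ℱ_t`. -/
theorem martingale_under_condexpKernel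
    {Ω : Type*} [mΩ : MeasurableSpace Ω] [StandardBorelSpace Ω]
    (P : Measure Ω) [IsProbabilityMeasure P]
    (ℱ : Filtration ℝ≥0 mΩ)
    (hcg : ∀ s : ℝ≥0, @MeasurableSpace.CountablyGenerated Ω (ℱ s))
    (M : ℝ≥0 → Ω → ℝ)
    (hadapted : ∀ s : ℝ≥0, Measurable[filtrationRightLimit ℱ s] (M s))
    (hrc : ∀ ω : Ω, ∀ s : ℝ≥0, ContinuousWithinAt (fun u => M u ω) (Set.Ici s) s)
    (hint : ∀ s : ℝ≥0, Integrable (M s) P)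
    (hui : UniformIntegrable M 1 P)
    (hmart : ∀ s u : ℝ≥0, s ≤ u → P[M u|filtrationRightLimit ℱ s] =ᵐ[P] M s)
    (t : ℝ≥0) :
    ∀ᵐ ω ∂P, ∀ r u : ℝ≥0, t ≤ r → r ≤ u →
      Integrable (M u) (@condExpKernel Ω mΩ _ P _ (ℱ t) ω) ∧
      (@condExpKernel Ω mΩ _ P _ (ℱ t) ω)[M u|filtrationRightLimit ℱ r]
        =ᵐ[@condExpKernel Ω mΩ _ P _ (ℱ t) ω] M r := by
  have hMmeas : ∀ x : ℝ≥0, Measurable (M x) :=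
    fun x => (hadapted x).mono (filtrationRightLimit_le ℱ x) le_rfl
  have H1 : ∀ᵐ ω ∂P, ∀ q : ℚ,
      Integrable (M (Real.toNNReal q)) (condExpKernel P (ℱ t) ω) :=
    ae_all_iff.2 fun q => (hint _).condExpKernel_ae (m := ℱ t)
  have H2 : ∀ᵐ ω ∂P, ∀ q q' : ℚ, t ≤ Real.toNNReal q →
      Real.toNNReal q ≤ Real.toNNReal q' →
      ∀ A : Set Ω, MeasurableSet[ℱ (Real.toNNReal q)] A →
        ∫ x in A, M (Real.toNNReal q') x ∂(condExpKernel P (ℱ t) ω)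
          = ∫ x in A, M (Real.toNNReal q) x ∂(condExpKernel P (ℱ t) ω) := by
    rw [ae_all_iff]; intro q
    rw [ae_all_iff]; intro q'
    by_cases hq : t ≤ Real.toNNReal q ∧ Real.toNNReal q ≤ Real.toNNReal q'
    · filter_upwards [ae_setIntegral_condExpKernel_eq P ℱ M hint hmart t _ _ hq.1 hq.2
        (le_filtrationRightLimit ℱ (Real.toNNReal q)) (hcg _)] with ω hω _ _
      exact hω
    · filter_upwards with ω h h' A hA
      exact absurd ⟨h, h'⟩ hq
  have H3 : ∀ᵐ ω ∂P, ∀ q q' : ℚ, t ≤ Real.toNNReal q →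
      Real.toNNReal q ≤ Real.toNNReal q' →
      ∀ A : Set Ω,
        MeasurableSet[MeasurableSpace.comap (M (Real.toNNReal q)) Real.measurableSpace] A →
        ∫ x in A, M (Real.toNNReal q') x ∂(condExpKernel P (ℱ t) ω)
          = ∫ x in A, M (Real.toNNReal q) x ∂(condExpKernel P (ℱ t) ω) := by
    rw [ae_all_iff]; intro q
    rw [ae_all_iff]; intro q'
    by_cases hq : t ≤ Real.toNNReal q ∧ Real.toNNReal q ≤ Real.toNNReal q'
    · filter_upwards [ae_setIntegral_condExpKernel_eq P ℱ M hint hmart t _ _ hq.1 hq.2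
        (Measurable.comap_le (hadapted (Real.toNNReal q)))
        (MeasurableSpace.CountablyGenerated.comap _)] with ω hω _ _
      exact hω
    · filter_upwards with ω h h' A hA
      exact absurd ⟨h, h'⟩ hq
  filter_upwards [H1, H2, H3] with ω h1 h2 h3
  intro r u hr hu
  obtain ⟨q₀, hq₀⟩ := exists_rat_gt ((u : ℝ≥0) : ℝ)
  have hq₀' : u < Real.toNNReal q₀ := Real.lt_toNNReal_iff_coe_lt.2 hq₀
  have hrq₀ : r < Real.toNNReal q₀ := lt_of_le_of_lt hu hq₀'
  have hKu := key_limit ℱ M hadapted hrc (condExpKernel P (ℱ t) ω) h1 t h2 h3 u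
    (le_trans hr hu) q₀ hq₀' Set.univ MeasurableSet.univ (fun q _ => MeasurableSet.univ)
  have hKr := key_limit ℱ M hadapted hrc (condExpKernel P (ℱ t) ω) h1 t h2 h3 r
    hr q₀ hrq₀ Set.univ MeasurableSet.univ (fun q _ => MeasurableSet.univ)
  refine ⟨hKu.1, ?_⟩
  have hm : filtrationRightLimit ℱ r ≤ mΩ := filtrationRightLimit_le ℱ r
  have hsm : StronglyMeasurable[filtrationRightLimit ℱ r] (M r) :=
    (hadapted r).stronglyMeasurable
  refine (ae_eq_condExp_of_forall_setIntegral_eq hm hKu.1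
    (fun B hB _ => hKr.1.integrableOn) (fun B hB _ => ?_)
    hsm.aestronglyMeasurable).symm
  have hBΩ : MeasurableSet B := hm _ hB
  have hBmemr : ∀ q : ℚ, r < Real.toNNReal q →
      MeasurableSet[ℱ (Real.toNNReal q)] B :=
    fun q hq => (filtrationRightLimit_le_of_lt ℱ hq) _ hB
  have hBmemu : ∀ q : ℚ, u < Real.toNNReal q →
      MeasurableSet[ℱ (Real.toNNReal q)] B :=
    fun q hq => hBmemr q (lt_of_le_of_lt hu hq)
  have e1 := (key_limit ℱ M hadapted hrc (condExpKernel P (ℱ t) ω) h1 t h2 h3 r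
    hr q₀ hrq₀ B hBΩ hBmemr).2
  have e2 := (key_limit ℱ M hadapted hrc (condExpKernel P (ℱ t) ω) h1 t h2 h3 u
    (le_trans hr hu) q₀ hq₀' B hBΩ hBmemu).2
  rw [e1, e2]
end

section
/- Let Ω be a standard Borel measurable space with σ-algebra 𝒜, let P be a probability measure on Ω, let m₁ ⊆ m₂ ⊆ 𝒜 be sub-σ-algebras with m₂ countably generated, and let f : Ω → ℝ be P-integrable. Let κ(ω) := condExpKernel P m₁ (ω) be the regular conditional probability of P given m₁. Then for P-almost every ω: f is κ(ω)-integrable and E^{κ(ω)}[f | m₂] = E^{P}[f | m₂], κ(ω)-almost everywhere (where E^{P}[f | m₂] denotes any fixed version of the conditional expectation of f given m₂ under P). -/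
open MeasureTheory ProbabilityTheory

lemma countable_generatePiSystem' {α : Type*} {S : Set (Set α)} (hS : S.Countable) :
    (generatePiSystem S).Countable := by
  have hsub : generatePiSystem S ⊆ Set.sInter '' {T : Set (Set α) | T.Finite ∧ T ⊆ S} := by
    intro t ht
    induction ht with
    | base hs =>
      exact ⟨{_}, ⟨Set.finite_singleton _, Set.singleton_subset_iff.2 hs⟩, by simp⟩
    | inter _ _ _ iht ihu =>
      obtain ⟨T₁, ⟨hT₁f, hT₁s⟩, rfl⟩ := iht
      obtain ⟨T₂, ⟨hT₂f, hT₂s⟩, rfl⟩ := ihu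
      exact ⟨T₁ ∪ T₂, ⟨hT₁f.union hT₂f, Set.union_subset hT₁s hT₂s⟩,
        by rw [Set.sInter_union]⟩
  exact ((Set.countable_setOf_finite_subset hS).image _).mono hsub

/-- The conditioning identity used in the proof of Lemma 3.4 of the paper: on a standard Borel
space, the regular conditional probability given a sub-σ-algebra `m₁` is compatible, outside a
single `P`-null set, with conditional expectations given a larger countably generated
sub-σ-algebra `m₂`. -/
theorem condexpKernel_condexp_compat
    {Ω : Type*} [mΩ : MeasurableSpace Ω] [StandardBorelSpace Ω]
    (P : Measure Ω) [IsProbabilityMeasure P]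
    (f : Ω → ℝ) (hf : Integrable f P)
    {m₁ m₂ : MeasurableSpace Ω} (h₁₂ : m₁ ≤ m₂) (h₂ : m₂ ≤ mΩ)
    (hcg : @MeasurableSpace.CountablyGenerated Ω m₂) :
    ∀ᵐ ω ∂P,
      Integrable f (@condExpKernel Ω mΩ _ P _ m₁ ω) ∧
      (@condExpKernel Ω mΩ _ P _ m₁ ω)[f|m₂] =ᵐ[@condExpKernel Ω mΩ _ P _ m₁ ω] P[f|m₂] := by
  letI _instΩ : MeasurableSpace Ω := mΩ
  have hm₁ : m₁ ≤ mΩ := h₁₂.trans h₂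
  have hh_int : Integrable (P[f|m₂]) P := integrable_condExp
  -- countable π-system generating m₂
  set S : Set (Set Ω) := generatePiSystem (@MeasurableSpace.countableGeneratingSet Ω m₂ hcg)
    with hS
  have hS_count : S.Countable :=
    countable_generatePiSystem' (@MeasurableSpace.countable_countableGeneratingSet Ω m₂ hcg)
  have hS_pi : IsPiSystem S := isPiSystem_generatePiSystem _
  have hS_gen : m₂ = MeasurableSpace.generateFrom S := by
    rw [hS, generateFrom_generatePiSystem_eq,
      @MeasurableSpace.generateFrom_countableGeneratingSet Ω m₂ hcg]
  have hS_meas : ∀ s ∈ S, MeasurableSet[m₂] s := by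
    intro s hs
    rw [hS_gen]
    exact MeasurableSpace.measurableSet_generateFrom hs
  -- key per-set identity
  have keyset : ∀ s : Set Ω, MeasurableSet[m₂] s →
      ∀ᵐ ω ∂P, ∫ x in s, f x ∂(condExpKernel P m₁ ω)
        = ∫ x in s, (P[f|m₂]) x ∂(condExpKernel P m₁ ω) := by
    intro s hs
    have hs' : MeasurableSet[mΩ] s := h₂ s hs
    have hg₁ : Integrable (s.indicator f) P := hf.indicator hs'
    have hg₂ : Integrable (s.indicator (P[f|m₂])) P := hh_int.indicator hs'
    have A := condExp_ae_eq_integral_condExpKernel (μ := P) hm₁ hg₁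
    have B := condExp_ae_eq_integral_condExpKernel (μ := P) hm₁ hg₂
    have C : P[s.indicator f|m₁] =ᵐ[P] P[s.indicator (P[f|m₂])|m₁] := by
      have t1 : P[P[s.indicator f|m₂]|m₁] =ᵐ[P] P[s.indicator f|m₁] :=
        condExp_condExp_of_le h₁₂ h₂
      have t2 : P[s.indicator f|m₂] =ᵐ[P] s.indicator (P[f|m₂]) := condExp_indicator hf hs
      exact t1.symm.trans (condExp_congr_ae t2)
    filter_upwards [A, B, C] with ω hA hB hC
    rw [← integral_indicator hs', ← integral_indicator hs', ← hA, ← hB, hC]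
  -- combine over the countable family S ∪ {univ}
  have hae : ∀ᵐ ω ∂P, ∀ s ∈ insert Set.univ S,
      ∫ x in s, f x ∂(condExpKernel P m₁ ω)
        = ∫ x in s, (P[f|m₂]) x ∂(condExpKernel P m₁ ω) := by
    rw [ae_ball_iff (hS_count.insert _)]
    intro s hs
    rcases hs with rfl | hs
    · exact keyset _ MeasurableSet.univ
    · exact keyset _ (hS_meas s hs)
  have hfint : ∀ᵐ ω ∂P, Integrable f (condExpKernel P m₁ ω) := hf.condExpKernel_ae
  have hhint : ∀ᵐ ω ∂P, Integrable (P[f|m₂]) (condExpKernel P m₁ ω) :=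
    hh_int.condExpKernel_ae
  filter_upwards [hfint, hhint, hae] with ω hfi hhi hsets
  refine ⟨hfi, ?_⟩
  -- extend integral identity from the π-system to all of m₂
  have huniv : ∫ x, f x ∂(condExpKernel P m₁ ω)
      = ∫ x, (P[f|m₂]) x ∂(condExpKernel P m₁ ω) := by
    have := hsets Set.univ (Set.mem_insert _ _)
    simpa [Measure.restrict_univ] using this
  have hall : ∀ t : Set Ω, MeasurableSet[m₂] t →
      ∫ x in t, f x ∂(condExpKernel P m₁ ω)
        = ∫ x in t, (P[f|m₂]) x ∂(condExpKernel P m₁ ω) := by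
    refine MeasurableSpace.induction_on_inter (m := m₂)
      (C := fun t _ => ∫ x in t, f x ∂(condExpKernel P m₁ ω)
        = ∫ x in t, (P[f|m₂]) x ∂(condExpKernel P m₁ ω)) (s := S) hS_gen hS_pi ?_ ?_ ?_ ?_
    · simp
    · exact fun t ht => hsets t (Set.mem_insert_of_mem _ ht)
    · intro t ht hC
      have ht' : MeasurableSet[mΩ] t := h₂ t ht
      have e1 := integral_add_compl ht' hfi
      have e2 := integral_add_compl ht' hhi
      rw [huniv] at e1
      linarith [e1, e2, hC]
    · intro g hdisj hmeas hC
      have hg' : ∀ i, MeasurableSet[mΩ] (g i) := fun i => h₂ _ (hmeas i)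
      rw [integral_iUnion hg' hdisj hfi.integrableOn,
        integral_iUnion hg' hdisj hhi.integrableOn]
      exact tsum_congr hC
  haveI : IsFiniteMeasure (condExpKernel P m₁ ω) := by infer_instance
  exact (ae_eq_condExp_of_forall_setIntegral_eq h₂ hfi
    (fun t _ _ => hhi.integrableOn)
    (fun t ht _ => (hall t ht).symm)
    ((stronglyMeasurable_condExp (m := m₂) (μ := P) (f := f)).aestronglyMeasurable)).symm
end
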